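/- Fix an integer g ≥ 1 and suppose I_i, V_i, I'_i, V'_i ∈ ℂ (i taken cyclically modulo g+1) satisfy the discrete periodic Toda relations I'_i = I_i + V_i − V'_{i−1} and I'_i·V'_i = I_{i+1}·V_i for all i. Then the characteristic polynomial of the Lax matrix is preserved: for all x ∈ ℂ and all nonzero y ∈ ℂ, det(x·Id + L'(y)) = det(x·Id + L(y)), where L(y) and L'(y) are the Lax matrices built from the unprimed and primed variables respectively. -/

import Mathlib

open Matrix

noncomputable def laxMatrix (g : ℕ) (I V : Fin (g + 1) → ℂ) (y : ℂ) :
    Matrix (Fin (g + 1)) (Fin (g + 1)) ℂ := fun i j =>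
  (if j = i then I (i + 1) + V i else 0)
  + (if (i : ℕ) + 1 = (j : ℕ) then 1 else 0)
  + (if (j : ℕ) + 1 = (i : ℕ) then I i * V i else 0)
  + (if (i : ℕ) = 0 ∧ (j : ℕ) = g then (-1) ^ g * (I 0 * V 0) / y else 0)
  + (if (i : ℕ) = g ∧ (j : ℕ) = 0 then (-1) ^ g * y else 0)

namespace DToda

noncomputable def sv (g : ℕ) (y : ℂ) (i : Fin (g+1)) : ℂ :=
  if (i : ℕ) = g then (-1)^g * y else 1

noncomputable def wv (g : ℕ) (y : ℂ) (j : Fin (g+1)) : ℂ :=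
  if (j : ℕ) = g then (-1)^g / y else 1

noncomputable def matA (g : ℕ) (V : Fin (g+1) → ℂ) (y : ℂ) :
    Matrix (Fin (g+1)) (Fin (g+1)) ℂ :=
  Matrix.of fun i j => (if j = i then V i else 0) + (if j = i + 1 then sv g y i else 0)

noncomputable def matB (g : ℕ) (I : Fin (g+1) → ℂ) (y : ℂ) :
    Matrix (Fin (g+1)) (Fin (g+1)) ℂ :=
  Matrix.of fun i j => (if j = i then 1 else 0) + (if i = j + 1 then I i * wv g y j else 0)

noncomputable def matS (g : ℕ) (y : ℂ) : Matrix (Fin (g+1)) (Fin (g+1)) ℂ :=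
  Matrix.of fun i j => if j = i + 1 then sv g y i else 0

noncomputable def matSinv (g : ℕ) (y : ℂ) : Matrix (Fin (g+1)) (Fin (g+1)) ℂ :=
  Matrix.of fun i j => if i = j + 1 then (sv g y j)⁻¹ else 0

variable {g : ℕ} {y : ℂ}

lemma sv_ne_zero (hy : y ≠ 0) (i : Fin (g+1)) : sv g y i ≠ 0 := by
  unfold sv; split_ifs
  · exact mul_ne_zero (pow_ne_zero _ (by norm_num)) hy
  · exact one_ne_zero

lemma AB_apply (Iv V : Fin (g+1) → ℂ) (i j : Fin (g+1)) :
    (matA g V y * matB g Iv y) i j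
      = V i * matB g Iv y i j + sv g y i * matB g Iv y (i+1) j := by
  simp only [Matrix.mul_apply, matA, Matrix.of_apply, add_mul, ite_mul, zero_mul,
    Finset.sum_add_distrib, Finset.sum_ite_eq', Finset.mem_univ, if_true]

lemma BA_row (Iv V : Fin (g+1) → ℂ) (i j : Fin (g+1)) :
    (matB g Iv y * matA g V y) (i+1) j
      = matA g V y (i+1) j + Iv (i+1) * wv g y i * matA g V y i j := by
  have hrw : ∀ k : Fin (g+1), (i + 1 = k + 1) = (k = i) := by
    intro k; simp [eq_comm]
  simp only [Matrix.mul_apply, matB, Matrix.of_apply, add_mul, ite_mul, zero_mul, one_mul,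
    Finset.sum_add_distrib, hrw, Finset.sum_ite_eq', Finset.mem_univ, if_true]

lemma S_mul_apply (M : Matrix (Fin (g+1)) (Fin (g+1)) ℂ) (i j : Fin (g+1)) :
    (matS g y * M) i j = sv g y i * M (i+1) j := by
  simp only [Matrix.mul_apply, matS, Matrix.of_apply, ite_mul, zero_mul,
    Finset.sum_ite_eq', Finset.mem_univ, if_true]

lemma mul_S_apply (M : Matrix (Fin (g+1)) (Fin (g+1)) ℂ) (i j : Fin (g+1)) :
    (M * matS g y) i (j+1) = M i j * sv g y j := by
  have hrw : ∀ k : Fin (g+1), ((j + 1 : Fin (g+1)) = k + 1) = (k = j) := by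
    intro k; simp [eq_comm]
  simp only [Matrix.mul_apply, matS, Matrix.of_apply, mul_ite, mul_zero, hrw,
    Finset.sum_ite_eq', Finset.mem_univ, if_true]

lemma S_mul_Sinv (hy : y ≠ 0) : matS g y * matSinv g y = 1 := by
  ext i j
  rw [S_mul_apply]
  simp only [matSinv, Matrix.of_apply]
  by_cases h : i = j
  · subst h
    simp [mul_inv_cancel₀ (sv_ne_zero hy i)]
  · have : ¬ (i + 1 = j + 1) := by simpa using h
    simp [this, Matrix.one_apply_ne h]

set_option maxHeartbeats 2000000 in
lemma key1 (hg : 1 ≤ g) (Iv V : Fin (g+1) → ℂ) (hy : y ≠ 0) :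
    matA g V y * matB g Iv y = laxMatrix g Iv V y := by
  ext i j
  rw [AB_apply]
  have hi := i.isLt
  have hj := j.isLt
  have h0g : (0 : ℕ) ≠ g := by omega
  have h1v : ((1 : Fin (g+1)) : ℕ) = 1 := by
    rw [Fin.val_one']; exact Nat.mod_eq_of_lt (by omega)
  have h0z : ((0 : Fin (g+1)) : ℕ) = 0 := Fin.val_zero _
  have hlz : ((Fin.last g : Fin (g+1)) : ℕ) = g := Fin.val_last _
  rcases eq_or_ne i 0 with rfl | hi0
  · rcases Nat.even_or_odd g with hpar | hpar <;>
    · simp only [laxMatrix, matB, sv, wv, Matrix.of_apply, hpar.neg_one_pow, Fin.ext_iff,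
        Fin.val_add_one, hlz, h0z, h0g, h1v, if_false, zero_add,
        and_false, false_and, and_true, true_and]
      split_ifs <;> first | omega | exact absurd rfl (by assumption) | exact (show False by assumption).elim | ring1 | (field_simp [hy]; all_goals ring1)
  · have hi0' : (i : ℕ) ≠ 0 := fun h => hi0 (Fin.ext (by rw [h, Fin.val_zero]))
    rcases Nat.even_or_odd g with hpar | hpar <;>
    · simp only [laxMatrix, matB, sv, wv, Matrix.of_apply, hpar.neg_one_pow, Fin.ext_iff,
        Fin.val_add_one, hlz, h0z, h0g, h1v, hi0', if_false, zero_add,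
        and_false, false_and, and_true, true_and]
      split_ifs <;> first | omega | exact absurd rfl (by assumption) | exact (show False by assumption).elim | ring1 | (field_simp [hy]; all_goals ring1)

set_option maxHeartbeats 2000000 in
lemma key2 (hg : 1 ≤ g) (Iv V Iv' V' : Fin (g+1) → ℂ)
    (h1 : ∀ i : Fin (g + 1), Iv' i = Iv i + V i - V' (i - 1))
    (h2 : ∀ i : Fin (g + 1), Iv' i * V' i = Iv (i + 1) * V i)
    (hy : y ≠ 0) :
    matS g y * (matB g Iv y * matA g V y) = laxMatrix g Iv' V' y * matS g y := by
  ext i j'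
  obtain ⟨j, rfl⟩ : ∃ j, j' = j + 1 := ⟨j' - 1, (sub_add_cancel j' 1).symm⟩
  rw [S_mul_apply, mul_S_apply, BA_row]
  have hi := i.isLt
  have hj := j.isLt
  have h0g : (0 : ℕ) ≠ g := by omega
  have h1v : ((1 : Fin (g+1)) : ℕ) = 1 := by
    rw [Fin.val_one']; exact Nat.mod_eq_of_lt (by omega)
  have h0z : ((0 : Fin (g+1)) : ℕ) = 0 := Fin.val_zero _
  have hlz : ((Fin.last g : Fin (g+1)) : ℕ) = g := Fin.val_last _
  simp only [laxMatrix, Matrix.of_apply]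
  simp only [h2]
  simp only [h1, add_sub_cancel_right]
  rcases eq_or_ne i 0 with rfl | hi0
  · rcases Nat.even_or_odd g with hpar | hpar <;>
    · simp only [matA, sv, wv, Matrix.of_apply, hpar.neg_one_pow, Fin.ext_iff,
        Fin.val_add_one, hlz, h0z, h0g, h1v, if_false, zero_add,
        and_false, false_and, and_true, true_and]
      split_ifs <;> first | omega | exact absurd rfl (by assumption) | exact (show False by assumption).elim | ring1 | (field_simp [hy]; all_goals ring1)
  · have hi0' : (i : ℕ) ≠ 0 := fun h => hi0 (Fin.ext (by rw [h, Fin.val_zero]))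
    rcases Nat.even_or_odd g with hpar | hpar <;>
    · simp only [matA, sv, wv, Matrix.of_apply, hpar.neg_one_pow, Fin.ext_iff,
        Fin.val_add_one, hlz, h0z, h0g, h1v, hi0', if_false, zero_add,
        and_false, false_and, and_true, true_and]
      split_ifs <;> first | omega | exact absurd rfl (by assumption) | exact (show False by assumption).elim | ring1 | (field_simp [hy]; all_goals ring1)

lemma det_smul_one_add_mul_comm {n : ℕ} (x : ℂ) (A B : Matrix (Fin n) (Fin n) ℂ) :
    (x • (1 : Matrix (Fin n) (Fin n) ℂ) + A * B).det
      = (x • (1 : Matrix (Fin n) (Fin n) ℂ) + B * A).det := by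
  rcases eq_or_ne x 0 with rfl | hx
  · simp only [zero_smul, zero_add]
    exact Matrix.det_mul_comm A B
  · have h1 : x • (1 : Matrix (Fin n) (Fin n) ℂ) + A * B
        = x • (1 + (x⁻¹ • A) * B) := by
      rw [smul_add, smul_mul_assoc, smul_smul, mul_inv_cancel₀ hx, one_smul]
    have h2 : x • (1 : Matrix (Fin n) (Fin n) ℂ) + B * A
        = x • (1 + B * (x⁻¹ • A)) := by
      rw [smul_add, mul_smul_comm, smul_smul, mul_inv_cancel₀ hx, one_smul]
    rw [h1, h2, Matrix.det_smul, Matrix.det_smul, Matrix.det_one_add_mul_comm]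

end DToda

open DToda in
theorem dToda_preserves_charpoly (g : ℕ) (hg : 1 ≤ g) (I V I' V' : Fin (g + 1) → ℂ)
    (h1 : ∀ i : Fin (g + 1), I' i = I i + V i - V' (i - 1))
    (h2 : ∀ i : Fin (g + 1), I' i * V' i = I (i + 1) * V i)
    (x y : ℂ) (hy : y ≠ 0) :
    (x • (1 : Matrix (Fin (g + 1)) (Fin (g + 1)) ℂ) + laxMatrix g I' V' y).det =
    (x • (1 : Matrix (Fin (g + 1)) (Fin (g + 1)) ℂ) + laxMatrix g I V y).det := by
  have hAB : matA g V y * matB g I y = laxMatrix g I V y := key1 hg I V hy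
  have hS : matS g y * (matB g I y * matA g V y) = laxMatrix g I' V' y * matS g y :=
    key2 hg I V I' V' h1 h2 hy
  have hdetS : (matS g y).det ≠ 0 :=
    (Matrix.isUnit_det_of_right_inverse (S_mul_Sinv hy)).ne_zero
  have e1 : matS g y * (x • 1 + matB g I y * matA g V y)
      = (x • 1 + laxMatrix g I' V' y) * matS g y := by
    rw [Matrix.mul_add, Matrix.add_mul, hS]
    congr 1
    rw [Matrix.mul_smul, Matrix.smul_mul, Matrix.mul_one, Matrix.one_mul]
  have e2 := congrArg Matrix.det e1
  rw [Matrix.det_mul, Matrix.det_mul] at e2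
  have e3 : (x • (1 : Matrix (Fin (g + 1)) (Fin (g + 1)) ℂ) + laxMatrix g I' V' y).det
      = (x • 1 + matB g I y * matA g V y).det := by
    apply mul_right_cancel₀ hdetS
    rw [← e2, mul_comm]
  rw [e3, det_smul_one_add_mul_comm, hAB]
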